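/- If b ≤ ω₁, then the product S_ω × S_{ω₁} of the sequential fans is not a k_R-space. -/

import Mathlib

open Set Filter Topology Cardinal

/-- A `k`-space: a set is closed whenever its trace on every compact subset is closed. -/
def IsKSpace (X : Type*) [TopologicalSpace X] : Prop :=
  ∀ C : Set X, (∀ K : Set X, IsCompact K → IsClosed (Subtype.val ⁻¹' C : Set K)) → IsClosed C

/-- A `k_R`-space: every real-valued function which is continuous on each
compact subset is continuous. -/
def IsKRSpace (X : Type*) [TopologicalSpace X] : Prop :=
  ∀ f : X → ℝ, (∀ K : Set X, IsCompact K → ContinuousOn f K) → Continuous f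
/-- The sequential fan with spokes indexed by `κ`: underlying set is
`Option (κ × ℕ)`, with `none` the apex and `some (α, n)` the `n`-th point
of the `α`-th spoke. -/
def Fan (κ : Type*) : Type _ := Option (κ × ℕ)

/-- The quotient topology on the fan: each point `some (α, n)` is isolated and
a set containing the apex is open iff it contains a tail of every spoke. -/
instance Fan.instTopologicalSpace (κ : Type*) : TopologicalSpace (Fan κ) where
  IsOpen s := (none : Option (κ × ℕ)) ∈ s → ∀ α : κ, {n : ℕ | (some (α, n) : Option (κ × ℕ)) ∉ s}.Finite
  isOpen_univ := by intro _ α; exact Set.finite_empty.subset (fun n hn => hn (Set.mem_univ _))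
  isOpen_inter := by
    intro s t hs ht hmem α
    refine ((hs hmem.1 α).union (ht hmem.2 α)).subset ?_
    intro n hn
    by_contra h
    simp only [Set.mem_union, Set.mem_setOf_eq] at h
    push_neg at h
    exact hn ⟨h.1, h.2⟩
  isOpen_sUnion := by
    intro S hS hmem α
    obtain ⟨s, hsS, hs⟩ := hmem
    refine (hS s hsS hs α).subset ?_
    intro n hn hns
    exact hn (Set.mem_sUnion.2 ⟨s, hsS, hns⟩)

/-- The apex of the sequential fan. -/
def Fan.apex {κ : Type*} : Fan κ := (none : Option (κ × ℕ))

/-- The `n`-th point of the `α`-th spoke of the sequential fan. -/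
def Fan.pt {κ : Type*} (α : κ) (n : ℕ) : Fan κ := (some (α, n) : Option (κ × ℕ))
/-- The bounding number `𝔟`: the least cardinality of a family in `ℕ → ℕ` which is
unbounded with respect to eventual domination. -/
noncomputable def boundingNumber : Cardinal :=
  sInf {c : Cardinal | ∃ F : Set (ℕ → ℕ), #↥F = c ∧
    ¬ ∃ g : ℕ → ℕ, ∀ f ∈ F, ∀ᶠ n in Filter.atTop, f n ≤ g n}

/-! ### Auxiliary lemmas -/

lemma Fan.isOpen_iff {κ : Type*} (s : Set (Fan κ)) :
    IsOpen s ↔ (Fan.apex ∈ s → ∀ α : κ, {n : ℕ | Fan.pt α n ∉ s}.Finite) := Iff.rfl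

lemma Fan.isOpen_not_apex {κ : Type*} (s : Set (Fan κ)) (h : Fan.apex ∉ s) : IsOpen s := by
  rw [Fan.isOpen_iff]
  exact fun hmem => absurd hmem h

lemma Fan.pt_inj {κ : Type*} {α β : κ} {n m : ℕ} (h : Fan.pt α n = Fan.pt β m) :
    α = β ∧ n = m := by
  have := Option.some.inj h
  exact ⟨congrArg Prod.fst this, congrArg Prod.snd this⟩

instance Fan.t1 {κ : Type*} : T1Space (Fan κ) := by
  constructor
  intro x
  rw [← isOpen_compl_iff, Fan.isOpen_iff]
  intro _ α
  apply Set.Subsingleton.finite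
  intro n hn m hm
  simp only [mem_setOf_eq, mem_compl_iff, not_not, mem_singleton_iff] at hn hm
  exact (Fan.pt_inj (hn.trans hm.symm)).2

/-- A compact subset of a fan meets only finitely many spokes. -/
lemma Fan.spokes_finite {κ : Type*} {K : Set (Fan κ)} (hK : IsCompact K) :
    {α : κ | ∃ n, Fan.pt α n ∈ K}.Finite := by
  set S := {α : κ | ∃ n, Fan.pt α n ∈ K} with hS
  have hn : ∀ α : S, ∃ n, Fan.pt α.1 n ∈ K := fun α => α.2
  choose n hnK using hn
  set T : Set (Fan κ) := Set.range (fun α : S => Fan.pt α.1 (n α)) with hT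
  have hcov : K ⊆ ⋃ i : Option S, (Option.elim i Tᶜ (fun α => {Fan.pt α.1 (n α)})) := by
    intro x hx
    by_cases hxT : x ∈ T
    · obtain ⟨α, rfl⟩ := hxT
      exact Set.mem_iUnion.2 ⟨some α, rfl⟩
    · exact Set.mem_iUnion.2 ⟨none, hxT⟩
  have hopen : ∀ i : Option S, IsOpen (Option.elim i Tᶜ (fun α => {Fan.pt α.1 (n α)})) := by
    rintro (_ | α)
    · rw [Fan.isOpen_iff]
      intro _ β
      apply Set.Subsingleton.finite
      intro m hm m' hm'
      simp only [mem_setOf_eq, Option.elim, mem_compl_iff, not_not] at hm hm'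
      obtain ⟨α, hα⟩ := hm
      obtain ⟨α', hα'⟩ := hm'
      obtain ⟨h1, h2⟩ := Fan.pt_inj hα
      obtain ⟨h1', h2'⟩ := Fan.pt_inj hα'
      have : α = α' := Subtype.ext (h1.trans h1'.symm)
      rw [← h2, ← h2', this]
    · exact Fan.isOpen_not_apex _ (fun h => Option.some_ne_none _ (Set.mem_singleton_iff.1 h).symm)
  obtain ⟨t, ht⟩ := hK.elim_finite_subcover _ hopen hcov
  have hmem : ∀ α : S, (some α : Option S) ∈ t := by
    intro α
    have := ht (hnK α)
    simp only [Set.mem_iUnion] at this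
    obtain ⟨i, hi, hmem⟩ := this
    match i with
    | none => exact absurd hmem (by simp only [Option.elim, mem_compl_iff, not_not]; exact ⟨α, rfl⟩)
    | some β =>
      obtain ⟨h1, _⟩ := Fan.pt_inj (hmem : Fan.pt α.1 (n α) ∈ {Fan.pt β.1 (n β)})
      rwa [show α = β from Subtype.ext h1]
  have : Finite S := Finite.of_injective (fun α : S => (⟨some α, hmem α⟩ : {i // i ∈ t}))
    (by intro a b hab; simpa [Subtype.ext_iff] using hab)
  exact Set.toFinite S

/-- From `𝔟 ≤ ω₁` and `#ι = ω₁`, extract an unbounded family indexed by `ι`. -/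
lemma exists_unbounded_family (ι : Type) (hι : #ι = aleph 1)
    (hb : boundingNumber ≤ aleph 1) :
    ∃ f : ι → (ℕ → ℕ), ∀ g : ℕ → ℕ, ∃ α : ι, ¬ ∀ᶠ n in Filter.atTop, f α n ≤ g n := by
  set B := {c : Cardinal | ∃ F : Set (ℕ → ℕ), #↥F = c ∧
    ¬ ∃ g : ℕ → ℕ, ∀ f ∈ F, ∀ᶠ n in Filter.atTop, f n ≤ g n} with hB
  have hne : B.Nonempty := by
    refine ⟨#↥(Set.univ : Set (ℕ → ℕ)), Set.univ, rfl, ?_⟩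
    rintro ⟨g, hg⟩
    have := hg (fun n => g n + 1) (Set.mem_univ _)
    obtain ⟨n, hn⟩ := this.exists
    simp at hn
  have hmem : boundingNumber ∈ B := csInf_mem hne
  obtain ⟨F, hFcard, hFunb⟩ := hmem
  have hFle : #↥F ≤ #ι := by rw [hFcard, hι]; exact hb
  have hFne : Nonempty ↥F := by
    by_contra h
    apply hFunb
    refine ⟨fun _ => 0, fun f hf => absurd ⟨⟨f, hf⟩⟩ h⟩
  obtain ⟨e⟩ := Cardinal.le_def _ _ |>.1 hFle
  refine ⟨fun i => (Function.invFun e i : ↥F).1, fun g => ?_⟩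
  push_neg at hFunb
  obtain ⟨h, hhF, hh⟩ := hFunb g
  refine ⟨e ⟨h, hhF⟩, ?_⟩
  have : Function.invFun (⇑e) (e ⟨h, hhF⟩) = ⟨h, hhF⟩ :=
    Function.leftInverse_invFun e.injective ⟨h, hhF⟩
  simpa [this, Filter.frequently_atTop] using hh

/-- If `𝔟 ≤ ω₁` then the product `S_ω × S_{ω₁}` of sequential fans is not a `k_R`-space. -/
theorem not_isKRSpace_fan_prod_of_b_le_aleph_one (ι : Type) (hι : #ι = aleph 1)
    (hb : boundingNumber ≤ aleph 1) :
    ¬ IsKRSpace (Fan ℕ × Fan ι) := by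
  intro hkr
  classical
  obtain ⟨f, hf⟩ := exists_unbounded_family ι hι hb
  set D : Set (Fan ℕ × Fan ι) :=
    {p | ∃ (α : ι) (m : ℕ), p = (Fan.pt m (f α m), Fan.pt α m)} with hD
  set F : Fan ℕ × Fan ι → ℝ := fun p => if p ∈ D then 1 else 0 with hF
  have hDopen : ∀ p ∈ D, IsOpen ({p} : Set (Fan ℕ × Fan ι)) := by
    rintro p ⟨α, m, rfl⟩
    rw [show ({(Fan.pt m (f α m), Fan.pt α m)} : Set (Fan ℕ × Fan ι)) =
        ({Fan.pt m (f α m)} : Set (Fan ℕ)) ×ˢ ({Fan.pt α m} : Set (Fan ι)) by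
      ext q; simp [Prod.ext_iff]]
    exact (Fan.isOpen_not_apex _ (fun h => Option.some_ne_none _ (Set.mem_singleton_iff.1 h).symm)).prod
      (Fan.isOpen_not_apex _ (fun h => Option.some_ne_none _ (Set.mem_singleton_iff.1 h).symm))
  -- F is continuous on every compact set
  have hcontOn : ∀ K : Set (Fan ℕ × Fan ι), IsCompact K → ContinuousOn F K := by
    intro K hK
    have hS1 := Fan.spokes_finite (hK.image continuous_fst)
    have hS2 := Fan.spokes_finite (hK.image continuous_snd)
    have hDK : (D ∩ K).Finite := by
      have hsub : D ∩ K ⊆ (fun q : ι × ℕ =>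
          ((Fan.pt q.2 (f q.1 q.2), Fan.pt q.1 q.2) : Fan ℕ × Fan ι)) ''
          ({α : ι | ∃ n, Fan.pt α n ∈ Prod.snd '' K} ×ˢ
            {m : ℕ | ∃ n, Fan.pt m n ∈ Prod.fst '' K}) := by
        rintro p ⟨⟨α, m, rfl⟩, hpK⟩
        exact ⟨(α, m), ⟨⟨m, ⟨_, hpK, rfl⟩⟩, ⟨f α m, ⟨_, hpK, rfl⟩⟩⟩, rfl⟩
      exact (((hS2.prod hS1).image _).subset hsub)
    intro x hx
    by_cases hxD : x ∈ D
    · apply ContinuousAt.continuousWithinAt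
      have heq : F =ᶠ[𝓝 x] (fun _ => F x) :=
        Filter.eventuallyEq_of_mem ((hDopen x hxD).mem_nhds rfl)
          (fun y hy => congrArg F hy)
      exact heq.continuousAt
    · have hclosed : IsClosed (D ∩ K) := hDK.isClosed
      have hV : (D ∩ K)ᶜ ∈ 𝓝 x := hclosed.isOpen_compl.mem_nhds (fun h => hxD h.1)
      have hx0 : F x = 0 := if_neg hxD
      unfold ContinuousWithinAt
      rw [hx0]
      apply Filter.Tendsto.congr' _ tendsto_const_nhds
      filter_upwards [mem_nhdsWithin_of_mem_nhds hV, self_mem_nhdsWithin] with y hy hyK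
      exact (if_neg (fun hD => hy ⟨hD, hyK⟩)).symm
  have hcont : Continuous F := hkr F hcontOn
  -- Discontinuity at the double apex
  have haD : ((Fan.apex, Fan.apex) : Fan ℕ × Fan ι) ∉ D := by
    rintro ⟨α, m, h⟩
    have := congrArg Prod.fst h
    simp [Fan.apex, Fan.pt] at this
  have hW : IsOpen (F ⁻¹' Set.Iio 1) := isOpen_Iio.preimage hcont
  have haW : ((Fan.apex, Fan.apex) : Fan ℕ × Fan ι) ∈ F ⁻¹' Set.Iio 1 := by
    simp only [Set.mem_preimage, Set.mem_Iio, hF]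
    rw [if_neg haD]; norm_num
  obtain ⟨U, V, hU, hV, haU, haV, hUV⟩ := isOpen_prod_iff.1 hW _ _ haW
  have hUb : ∀ m : ℕ, ∃ b, ∀ n, b < n → Fan.pt m n ∈ U := by
    intro m
    obtain ⟨b, hbb⟩ := ((Fan.isOpen_iff _).1 hU haU m).bddAbove
    exact ⟨b, fun n hn => by
      by_contra h
      exact absurd (hbb (h : n ∈ {n | Fan.pt m n ∉ U})) (not_le.2 hn)⟩
  choose φ hφ using hUb
  have hVb : ∀ α : ι, ∃ b, ∀ n, b < n → Fan.pt α n ∈ V := by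
    intro α
    obtain ⟨b, hbb⟩ := ((Fan.isOpen_iff _).1 hV haV α).bddAbove
    exact ⟨b, fun n hn => by
      by_contra h
      exact absurd (hbb (h : n ∈ {n | Fan.pt α n ∉ V})) (not_le.2 hn)⟩
  choose ψ hψ using hVb
  obtain ⟨α, hα⟩ := hf φ
  rw [Filter.not_eventually] at hα
  obtain ⟨m, hm, hgt⟩ := Filter.frequently_atTop.1 hα (ψ α + 1)
  rw [not_le] at hgt
  have hpD : ((Fan.pt m (f α m), Fan.pt α m) : Fan ℕ × Fan ι) ∈ D := ⟨α, m, rfl⟩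
  have hpW : ((Fan.pt m (f α m), Fan.pt α m) : Fan ℕ × Fan ι) ∈ F ⁻¹' Set.Iio 1 :=
    hUV ⟨hφ m _ hgt, hψ α m (by omega)⟩
  simp only [Set.mem_preimage, Set.mem_Iio, hF] at hpW
  rw [if_pos hpD] at hpW
  exact lt_irrefl _ hpW
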